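/- Let k ≥ 5 be an odd integer not divisible by 3, and let φ denote Euler's totient function. Then for every function x : {0, 1, …, k−1} → [−1, 1], one has Σ_{0 ≤ i < j ≤ k−1, gcd(j−i, k) = 1} x_i·x_j ≥ −k·(k − φ(k))/2. -/

import Mathlib

open Finset

lemma sq_sum_eq (n : ℕ) (x : ℕ → ℝ) :
    (∑ i ∈ range n, x i)^2 =
      ∑ i ∈ range n, (x i)^2 + 2 * ∑ j ∈ range n, ∑ i ∈ range j, x i * x j := by
  induction n with
  | zero => simp
  | succ n ih =>
    rw [sum_range_succ, sum_range_succ (fun i => (x i)^2),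
      sum_range_succ (fun j => ∑ i ∈ range j, x i * x j), ← Finset.sum_mul]
    linear_combination ih

lemma swap_sum (n : ℕ) (F : ℕ → ℝ) :
    ∑ j ∈ range n, ∑ i ∈ range j, F i = ∑ i ∈ range n, ((n - 1 - i : ℕ) : ℝ) * F i := by
  induction n with
  | zero => simp
  | succ n ih =>
    rw [sum_range_succ, ih, sum_range_succ]
    have h1 : ((n + 1 - 1 - n : ℕ) : ℝ) = 0 := by norm_num
    rw [h1, zero_mul, add_zero, ← Finset.sum_add_distrib]
    apply sum_congr rfl
    intro i hi
    have hi' : i < n := mem_range.mp hi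
    have : (n + 1 - 1 - i : ℕ) = (n - 1 - i) + 1 := by omega
    rw [this]
    push_cast
    ring

lemma refl_Ico (k : ℕ) (g : ℕ → ℝ) :
    ∑ d ∈ Ico 1 k, g d = ∑ d ∈ Ico 1 k, g (k - d) := by
  rw [Finset.sum_Ico_eq_sum_range, Finset.sum_Ico_eq_sum_range,
    ← Finset.sum_range_reflect]
  apply sum_congr rfl
  intro i hi
  have hi' : i < k - 1 := mem_range.mp hi
  congr 1
  omega

theorem coprime_pair_sum_lower_bound (k : ℕ) (hk : 5 ≤ k) (hodd : Odd k)
    (h3 : ¬ 3 ∣ k) (x : ℕ → ℝ) (hx : ∀ i < k, x i ∈ Set.Icc (-1 : ℝ) 1) :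
    -((k : ℝ) * ((k : ℝ) - Nat.totient k)) / 2 ≤
      ∑ j ∈ Finset.range k,
        ∑ i ∈ (Finset.range j).filter (fun i => Nat.gcd (j - i) k = 1),
          x i * x j := by
  set c : ℕ → ℝ := fun d => if Nat.gcd d k = 1 then 0 else 1 with hc
  -- Step 1: C in Ico form
  have hC1 : ∀ j, ∑ i ∈ range j, c (j - i) = ∑ i ∈ range j, c (i + 1) := by
    intro j
    rw [← Finset.sum_range_reflect (fun i => c (i + 1)) j]
    apply sum_congr rfl
    intro i hi
    have hi' : i < j := mem_range.mp hi
    congr 1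
    omega
  have hC2 : ∑ j ∈ range k, ∑ i ∈ range j, c (j - i)
      = ∑ i ∈ range k, ((k - 1 - i : ℕ) : ℝ) * c (i + 1) := by
    rw [← swap_sum k (fun i => c (i + 1))]
    exact sum_congr rfl fun j _ => hC1 j
  have hC3 : ∑ i ∈ range k, ((k - 1 - i : ℕ) : ℝ) * c (i + 1)
      = ∑ d ∈ Ico 1 k, ((k - d : ℕ) : ℝ) * c d := by
    have : ∑ d ∈ Ico 1 (k + 1), ((k - d : ℕ) : ℝ) * c d
        = ∑ i ∈ range k, ((k - 1 - i : ℕ) : ℝ) * c (i + 1) := by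
      rw [Finset.sum_Ico_eq_sum_range]
      apply sum_congr (by norm_num) 
      intro i _
      congr 2
      · omega
      · omega
    rw [← this, Finset.sum_Ico_succ_top (by omega : 1 ≤ k)]
    simp
  have hcsym : ∀ d ∈ Ico 1 k, c (k - d) = c d := by
    intro d hd
    have hd' := mem_Ico.mp hd
    simp only [hc]
    simp only [Nat.gcd_self_sub_left (show d ≤ k by omega)]
  have hC4 : ∑ d ∈ Ico 1 k, ((k - d : ℕ) : ℝ) * c d
      = ∑ d ∈ Ico 1 k, (d : ℝ) * c d := by
    rw [refl_Ico k (fun d => ((k - d : ℕ) : ℝ) * c d)]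
    apply sum_congr rfl
    intro d hd
    have hd' := mem_Ico.mp hd
    rw [hcsym d hd]
    congr 2
    omega
  -- sum of c over Ico 1 k
  have hcard : ∑ d ∈ Ico 1 k, c d = (k : ℝ) - 1 - (Nat.totient k : ℝ) := by
    have h0 : ∑ d ∈ range k, c d = (1 : ℝ) + ∑ d ∈ Ico 1 k, c d := by
      rw [Finset.range_eq_Ico, Finset.sum_eq_sum_Ico_succ_bot (by omega : 0 < k)]
      congr 1
      simp only [hc]
      rw [if_neg (by simp [Nat.gcd_zero_left]; omega)]
    have h1 : ∑ d ∈ range k, c d = (k : ℝ) - (Nat.totient k : ℝ) := by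
      have : ∑ d ∈ range k, c d
          = ∑ d ∈ range k, ((1 : ℝ) - if Nat.gcd d k = 1 then 1 else 0) := by
        apply sum_congr rfl
        intro d _
        simp only [hc]
        split_ifs <;> norm_num
      rw [this, Finset.sum_sub_distrib, Finset.sum_const, Finset.sum_boole]
      have : (range k).filter (fun d => Nat.gcd d k = 1)
          = (range k).filter k.Coprime := by
        apply filter_congr
        intro d _
        simp [Nat.Coprime, Nat.gcd_comm]
      rw [this, ← Nat.totient]
      simp
    linarith
  -- value of C
  have hCval : ∑ j ∈ range k, ∑ i ∈ range j, c (j - i)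
      = (k : ℝ) * ((k : ℝ) - 1 - (Nat.totient k : ℝ)) / 2 := by
    have h2C : 2 * (∑ d ∈ Ico 1 k, ((k - d : ℕ) : ℝ) * c d)
        = (k : ℝ) * ((k : ℝ) - 1 - (Nat.totient k : ℝ)) := by
      have : ∑ d ∈ Ico 1 k, ((k - d : ℕ) : ℝ) * c d
            + ∑ d ∈ Ico 1 k, (d : ℝ) * c d
          = (k : ℝ) * ∑ d ∈ Ico 1 k, c d := by
        rw [← Finset.sum_add_distrib, Finset.mul_sum]
        apply sum_congr rfl
        intro d hd
        have hd' := mem_Ico.mp hd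
        have : ((k - d : ℕ) : ℝ) = (k : ℝ) - (d : ℝ) := by
          push_cast [Nat.cast_sub (by omega : d ≤ k)]
          ring
        rw [this]
        ring
      rw [hcard] at this
      linarith [hC4]
    rw [hC2, hC3]
    linarith
  -- per-row bound
  have hrow : ∀ j ∈ range k,
      ∑ i ∈ range j, x i * x j - ∑ i ∈ range j, c (j - i)
        ≤ ∑ i ∈ (range j).filter (fun i => Nat.gcd (j - i) k = 1), x i * x j := by
    intro j hj
    have hjk : j < k := mem_range.mp hj
    rw [← Finset.sum_filter_add_sum_filter_not (range j)
      (fun i => Nat.gcd (j - i) k = 1) (fun i => x i * x j)]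
    have hbad : ∑ i ∈ (range j).filter (fun i => ¬ Nat.gcd (j - i) k = 1), x i * x j
        ≤ ∑ i ∈ range j, c (j - i) := by
      have : ∑ i ∈ range j, c (j - i)
          = ∑ i ∈ (range j).filter (fun i => ¬ Nat.gcd (j - i) k = 1), 1 := by
        rw [Finset.sum_filter]
        apply sum_congr rfl
        intro i _
        simp only [hc]
        split_ifs <;> norm_num <;> tauto
      rw [this]
      apply Finset.sum_le_sum
      intro i hi
      have hi' : i < j := mem_range.mp (mem_filter.mp hi).1
      have h1 := hx i (by omega)
      have h2 := hx j hjk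
      simp only [Set.mem_Icc] at h1 h2
      nlinarith [h1.1, h1.2, h2.1, h2.2]
    linarith
  -- total sum bound
  have hall : -(k : ℝ) / 2 ≤ ∑ j ∈ range k, ∑ i ∈ range j, x i * x j := by
    have hsq := sq_sum_eq k x
    have hsum2 : ∑ i ∈ range k, (x i)^2 ≤ (k : ℝ) := by
      calc ∑ i ∈ range k, (x i)^2 ≤ ∑ i ∈ range k, (1 : ℝ) := by
            apply Finset.sum_le_sum
            intro i hi
            have h1 := hx i (mem_range.mp hi)
            simp only [Set.mem_Icc] at h1
            nlinarith [h1.1, h1.2]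
        _ = (k : ℝ) := by simp
    nlinarith [sq_nonneg (∑ i ∈ range k, x i)]
  have hmain : ∑ j ∈ range k, ∑ i ∈ range j, x i * x j
      - ∑ j ∈ range k, ∑ i ∈ range j, c (j - i)
      ≤ ∑ j ∈ Finset.range k,
        ∑ i ∈ (Finset.range j).filter (fun i => Nat.gcd (j - i) k = 1), x i * x j := by
    rw [← Finset.sum_sub_distrib]
    exact Finset.sum_le_sum hrow
  have hφ : (0 : ℝ) ≤ (Nat.totient k : ℝ) := by positivity
  nlinarith [hmain, hall, hCval]
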